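/- Let Y be a closed subspace of a real Banach space X. If for every hyperplane Z in Y (kernel of a nonzero functional in Y*) the quotient Y/Z has property-(U) in X/Z, then Y has property-(U) in X, i.e., every y* ∈ Y* has a unique norm-preserving extension to X. -/

import Mathlib

open NormedSpace Metric Set

namespace Paper

variable {X : Type*} [NormedAddCommGroup X] [NormedSpace ℝ X]

/-- The restriction of a continuous linear functional to a subspace. -/
noncomputable def restr (Y : Submodule ℝ X) (f : StrongDual ℝ X) : StrongDual ℝ ↥Y :=
  f.comp Y.subtypeL

/-- The annihilator `Y⊥` of a subspace `Y` in the dual. -/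
def ann (Y : Submodule ℝ X) : Set (StrongDual ℝ X) := {f | ∀ y ∈ Y, f y = 0}

/-- The set of norm-preserving (Hahn–Banach) extensions of `g : Y* ` to `X`. -/
def HB (Y : Submodule ℝ X) (g : StrongDual ℝ ↥Y) : Set (StrongDual ℝ X) :=
  {f | (∀ y : Y, f (y : X) = g y) ∧ ‖f‖ = ‖g‖}

/-- Best approximations to `x` from a set `A`. -/
def bestApprox {E : Type*} [NormedAddCommGroup E] (A : Set E) (x : E) : Set E :=
  {z ∈ A | ‖x - z‖ = infDist x A}

/-- Property-(U): every functional on `Y` has a unique norm-preserving extension to `X`. -/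
def propU (Y : Submodule ℝ X) : Prop :=
  ∀ g : StrongDual ℝ ↥Y, ∃! f : StrongDual ℝ X, f ∈ HB Y g

/-- `Y# `: the set of functionals whose norm equals the norm of their restriction to `Y`. -/
def sharp (Y : Submodule ℝ X) : Set (StrongDual ℝ X) := {f | ‖f‖ = ‖restr Y f‖}

/-- Property-(HB), stated via the decomposition `X* = Y# ⊕ Y⊥`. -/
def propHB (Y : Submodule ℝ X) : Prop :=
  (∀ f ∈ sharp Y, ∀ g ∈ sharp Y, f + g ∈ sharp Y) ∧
  (∀ (c : ℝ), ∀ f ∈ sharp Y, c • f ∈ sharp Y) ∧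
  (∀ f : StrongDual ℝ X, ∃ g ∈ sharp Y, ∃ h ∈ ann Y, f = g + h) ∧
  (∀ g ∈ sharp Y, ∀ h ∈ ann Y, h ≠ 0 → ‖g‖ < ‖g + h‖ ∧ ‖h‖ ≤ ‖g + h‖)

end Paper

open Paper

section Aux

variable {X : Type*} [NormedAddCommGroup X] [NormedSpace ℝ X]

open NormedSpace in
/-- Lift a functional vanishing on a submodule to the quotient. -/
noncomputable def liftDual (Z : Submodule ℝ X) (f : StrongDual ℝ X)
    (hf : ∀ z ∈ Z, f z = 0) : StrongDual ℝ (X ⧸ Z) :=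
  LinearMap.mkContinuous (Z.liftQ (f : X →ₗ[ℝ] ℝ) (fun z hz => hf z hz)) ‖f‖ (by
    intro q
    refine le_of_forall_pos_le_add (fun ε hε => ?_)
    have hε' : 0 < ε / (‖f‖ + 1) := div_pos hε (by positivity)
    obtain ⟨x, hx, hxn⟩ := Submodule.Quotient.norm_mk_lt q hε'
    have h1 : Z.liftQ (f : X →ₗ[ℝ] ℝ) (fun z hz => hf z hz) q = f x := by
      rw [← hx]; rfl
    have h2 : ‖f x‖ ≤ ‖f‖ * ‖x‖ := f.le_opNorm x
    have h3 : ‖f‖ * ‖x‖ ≤ ‖f‖ * (‖q‖ + ε / (‖f‖ + 1)) := by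
      have := norm_nonneg f; nlinarith
    have h4 : ‖f‖ * (ε / (‖f‖ + 1)) ≤ ε := by
      rw [mul_div_assoc']
      rw [div_le_iff₀ (by positivity)]
      have := norm_nonneg f; nlinarith
    rw [h1]
    nlinarith)

theorem liftDual_mk (Z : Submodule ℝ X) (f : StrongDual ℝ X)
    (hf : ∀ z ∈ Z, f z = 0) (x : X) : liftDual Z f hf (Submodule.Quotient.mk x) = f x := rfl

theorem liftDual_norm (Z : Submodule ℝ X) (f : StrongDual ℝ X)
    (hf : ∀ z ∈ Z, f z = 0) : ‖liftDual Z f hf‖ = ‖f‖ := by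
  refine le_antisymm (LinearMap.mkContinuous_norm_le _ (norm_nonneg f) _) ?_
  refine f.opNorm_le_bound (ContinuousLinearMap.opNorm_nonneg _) (fun x => ?_)
  calc ‖f x‖ = ‖liftDual Z f hf (Submodule.Quotient.mk x)‖ := rfl
    _ ≤ ‖liftDual Z f hf‖ * ‖(Submodule.Quotient.mk x : X ⧸ Z)‖ := (liftDual Z f hf).le_opNorm _
    _ ≤ ‖liftDual Z f hf‖ * ‖x‖ := by
        exact mul_le_mul_of_nonneg_left (Submodule.Quotient.norm_mk_le _ _) (ContinuousLinearMap.opNorm_nonneg _)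

end Aux


/-- if for every hyperplane `Z = ker g` in `Y` (`g ∈ Y*`, `g ≠ 0`) the quotient
`Y/Z` has property-(U) in `X/Z`, then `Y` has property-(U) in `X`. -/
theorem stmt2 {X : Type*} [NormedAddCommGroup X] [NormedSpace ℝ X] [CompleteSpace X]
    (Y : Submodule ℝ X) (hYc : IsClosed (Y : Set X))
    (h : ∀ g : StrongDual ℝ ↥Y, g ≠ 0 →
      ∀ [IsClosed (((LinearMap.ker (g : ↥Y →ₗ[ℝ] ℝ)).map Y.subtype : Submodule ℝ X) : Set X)],
        propU (X := X ⧸ ((LinearMap.ker (g : ↥Y →ₗ[ℝ] ℝ)).map Y.subtype : Submodule ℝ X))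
          (Y.map ((LinearMap.ker (g : ↥Y →ₗ[ℝ] ℝ)).map Y.subtype).mkQ)) :
    propU Y := by
  intro g
  obtain ⟨F, hF1, hF2⟩ := exists_extension_norm_eq Y g
  have key : ∀ f₁ ∈ HB Y g, ∀ f₂ ∈ HB Y g, f₁ = f₂ := by
    by_cases hg : g = 0
    · intro f₁ hf₁ f₂ hf₂
      have h₁ : ‖f₁‖ = 0 := by rw [hf₁.2, hg, ContinuousLinearMap.opNorm_zero]
      have h₂ : ‖f₂‖ = 0 := by rw [hf₂.2, hg, ContinuousLinearMap.opNorm_zero]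
      rw [norm_eq_zero] at h₁ h₂
      rw [h₁, h₂]
    · intro f₁ hf₁ f₂ hf₂
      set Z : Submodule ℝ X := (LinearMap.ker (g : ↥Y →ₗ[ℝ] ℝ)).map Y.subtype with hZ
      have hZc : IsClosed (Z : Set X) := by
        have hset : (Z : Set X) = Subtype.val '' ((LinearMap.ker (g : ↥Y →ₗ[ℝ] ℝ) : Submodule ℝ Y) : Set Y) := by
          ext x; simp [hZ, Set.mem_image]
        rw [hset]
        exact hYc.isClosedEmbedding_subtypeVal.isClosedMap _
          (ContinuousLinearMap.isClosed_ker g)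
      letI : IsClosed (((LinearMap.ker (g : ↥Y →ₗ[ℝ] ℝ)).map Y.subtype : Submodule ℝ X) : Set X) := hZc
      have hu := h g hg
      have vanish : ∀ f ∈ HB Y g, ∀ z ∈ Z, f z = 0 := by
        intro f hf z hz
        obtain ⟨y, hy, rfl⟩ := hz
        have := hf.1 y
        simp only [Submodule.subtype_apply] at this ⊢
        rw [this]; exact LinearMap.mem_ker.mp hy
      set F₁ := liftDual Z f₁ (vanish f₁ hf₁) with hF₁
      set F₂ := liftDual Z f₂ (vanish f₂ hf₂) with hF₂
      set W : Submodule ℝ (X ⧸ Z) := Y.map Z.mkQ with hW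
      set g' : StrongDual ℝ ↥W := restr W F₁ with hg'
      -- agreement on W
      have agree : ∀ f, ∀ hf : f ∈ HB Y g, ∀ w : W,
          liftDual Z f (vanish f hf) (w : X ⧸ Z) = g' w := by
        intro f hf w
        obtain ⟨q, hq⟩ := w
        obtain ⟨y, hy, rfl⟩ := hq
        have e1 : liftDual Z f (vanish f hf) (Z.mkQ y) = f y := rfl
        have e2 : g' ⟨Z.mkQ y, ⟨y, hy, rfl⟩⟩ = f₁ y := rfl
        rw [e2]
        show liftDual Z f (vanish f hf) (Z.mkQ y) = f₁ y
        rw [e1, hf.1 ⟨y, hy⟩, ← hf₁.1 ⟨y, hy⟩]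
      -- norm of g'
      have hgW : ‖g'‖ = ‖g‖ := by
        refine le_antisymm ?_ ?_
        · calc ‖g'‖ ≤ ‖F₁‖ := by
                refine g'.opNorm_le_bound (ContinuousLinearMap.opNorm_nonneg _) (fun w => ?_)
                exact F₁.le_opNorm (w : X ⧸ Z)
            _ = ‖g‖ := by rw [hF₁, liftDual_norm, hf₁.2]
        · refine g.opNorm_le_bound (ContinuousLinearMap.opNorm_nonneg _) (fun y => ?_)
          have hyW : Z.mkQ (y : X) ∈ W := ⟨(y : X), y.2, rfl⟩
          have e : g' ⟨Z.mkQ (y : X), hyW⟩ = g y := by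
            have : g' ⟨Z.mkQ (y : X), hyW⟩ = f₁ (y : X) := rfl
            rw [this, hf₁.1 y]
          calc ‖g y‖ = ‖g' ⟨Z.mkQ (y : X), hyW⟩‖ := by rw [e]
            _ ≤ ‖g'‖ * ‖(⟨Z.mkQ (y : X), hyW⟩ : W)‖ := g'.le_opNorm _
            _ ≤ ‖g'‖ * ‖(y : X)‖ := by
                refine mul_le_mul_of_nonneg_left ?_ (ContinuousLinearMap.opNorm_nonneg _)
                exact Submodule.Quotient.norm_mk_le _ _
      have mem₁ : F₁ ∈ HB W g' := by
        refine ⟨fun w => agree f₁ hf₁ w, ?_⟩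
        rw [hF₁, liftDual_norm, hf₁.2, hgW]
      have mem₂ : F₂ ∈ HB W g' := by
        refine ⟨fun w => agree f₂ hf₂ w, ?_⟩
        rw [hF₂, liftDual_norm, hf₂.2, hgW]
      obtain ⟨u, _, huniq⟩ := hu g'
      have hFF : F₁ = F₂ := by rw [huniq F₁ mem₁, huniq F₂ mem₂]
      ext x
      calc f₁ x = F₁ (Z.mkQ x) := rfl
        _ = F₂ (Z.mkQ x) := by rw [hFF]
        _ = f₂ x := rfl
  exact ⟨F, ⟨fun y => hF1 y, hF2⟩, fun f hf => key f hf F ⟨fun y => hF1 y, hF2⟩⟩
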